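/- For a T₀ space X, the following are equivalent: (1) X is well-filtered; (2) every upper-Vietoris-open subset of K(X) is Scott open and the Scott power space Σ K(X) is well-filtered; (3) every upper-Vietoris-open subset of K(X) is Scott open and Σ K(X) is a d-space; (4) K(X) with the Smyth order is a dcpo and every upper-Vietoris-open subset of K(X) is Scott open. -/

import Mathlib

open Set Topology TopologicalSpace

universe u v

/-- A subset of a topological space is *saturated* if it equals the intersection of the
open sets containing it. -/
def IsSat {X : Type u} [TopologicalSpace X] (A : Set X) : Prop :=
  A = ⋂₀ {U : Set X | IsOpen U ∧ A ⊆ U}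

/-- The saturation `↑a` of a point `a` : the intersection of all open sets containing `a`. -/
def satPt {X : Type u} [TopologicalSpace X] (a : X) : Set X :=
  ⋂₀ {U : Set X | IsOpen U ∧ a ∈ U}

/-- `KS X` is the collection of all nonempty compact saturated subsets of `X`. -/
def KS (X : Type u) [TopologicalSpace X] : Type u :=
  {K : Set X // K.Nonempty ∧ IsCompact K ∧ IsSat K}

/-- The *Smyth order* on `KS X` : `K ≤ L` iff `L ⊆ K` (reverse inclusion). -/
instance KS.instPartialOrder {X : Type u} [TopologicalSpace X] : PartialOrder (KS X) where
  le K L := L.1 ⊆ K.1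
  le_refl K := subset_rfl
  le_trans K L M h₁ h₂ := by intro x hx; exact h₁ (h₂ hx)
  le_antisymm K L h₁ h₂ := by exact Subtype.ext (subset_antisymm h₂ h₁)

/-- The *upper Vietoris topology* on `KS X`, generated by the sets `□U = {K | K ⊆ U}`
for `U` open in `X`.  The resulting space is the Smyth power space `P_S(X)`. -/
def upperVietoris (X : Type u) [TopologicalSpace X] : TopologicalSpace (KS X) :=
  TopologicalSpace.generateFrom
    {S : Set (KS X) | ∃ U : Set X, IsOpen U ∧ S = {K : KS X | K.1 ⊆ U}}

/-- Scott-open subsets of a preorder: upper sets inaccessible by suprema of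
(nonempty) directed sets. -/
def ScottOpen {P : Type u} [Preorder P] (U : Set P) : Prop :=
  IsUpperSet U ∧ ∀ d : Set P, d.Nonempty → DirectedOn (· ≤ ·) d →
    ∀ a : P, IsLUB d a → a ∈ U → (d ∩ U).Nonempty

/-- The Scott topology of a preorder. -/
def scottTop (P : Type u) [Preorder P] : TopologicalSpace P where
  IsOpen := ScottOpen
  isOpen_univ := ⟨isUpperSet_univ, fun d hd _ _ _ _ => by simpa using hd⟩
  isOpen_inter := by
    rintro U V ⟨hUu, hUd⟩ ⟨hVu, hVd⟩
    refine ⟨hUu.inter hVu, fun d hd hdir a ha haUV => ?_⟩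
    obtain ⟨x, hxd, hxU⟩ := hUd d hd hdir a ha haUV.1
    obtain ⟨y, hyd, hyV⟩ := hVd d hd hdir a ha haUV.2
    obtain ⟨z, hzd, hxz, hyz⟩ := hdir x hxd y hyd
    exact ⟨z, hzd, hUu hxz hxU, hVu hyz hyV⟩
  isOpen_sUnion := by
    intro S hS
    refine ⟨isUpperSet_sUnion fun s hs => (hS s hs).1, fun d hd hdir a ha haU => ?_⟩
    obtain ⟨t, htS, hat⟩ := haU
    obtain ⟨x, hxd, hxt⟩ := (hS t htS).2 d hd hdir a ha hat
    exact ⟨x, hxd, t, htS, hxt⟩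

/-- A topological space is *well-filtered* if for every nonempty family of nonempty compact
saturated sets which is filtered under reverse inclusion and every open `U` containing the
intersection of the family, some member of the family is contained in `U`. -/
def WellFiltered (X : Type u) [TopologicalSpace X] : Prop :=
  ∀ 𝒦 : Set (Set X), 𝒦.Nonempty →
    (∀ K ∈ 𝒦, K.Nonempty ∧ IsCompact K ∧ IsSat K) →
    (∀ K₁ ∈ 𝒦, ∀ K₂ ∈ 𝒦, ∃ K₃ ∈ 𝒦, K₃ ⊆ K₁ ∧ K₃ ⊆ K₂) →
    ∀ U : Set X, IsOpen U → ⋂₀ 𝒦 ⊆ U → ∃ K ∈ 𝒦, K ⊆ U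

/-- The specialization order of a topological space: `x ≤ y` iff `x ∈ cl {y}`. -/
def specLE {X : Type u} [TopologicalSpace X] (x y : X) : Prop := x ∈ closure {y}

/-- Least upper bound with respect to an explicit relation. -/
def RelLUB {P : Type u} (r : P → P → Prop) (d : Set P) (a : P) : Prop :=
  (∀ x ∈ d, r x a) ∧ ∀ b : P, (∀ x ∈ d, r x b) → r a b

/-- Scott openness with respect to an explicit relation. -/
def RelScottOpen {P : Type u} (r : P → P → Prop) (U : Set P) : Prop :=
  (∀ ⦃x y : P⦄, x ∈ U → r x y → y ∈ U) ∧
  ∀ d : Set P, d.Nonempty → DirectedOn r d → ∀ a : P, RelLUB r d a → a ∈ U → (d ∩ U).Nonempty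

/-- A `d`-space (monotone convergence space): the specialization order is directed complete
and every open set is Scott open with respect to the specialization order. -/
def DSpace (X : Type u) [TopologicalSpace X] : Prop :=
  (∀ d : Set X, d.Nonempty → DirectedOn specLE d → ∃ a : X, RelLUB specLE d a) ∧
  ∀ U : Set X, IsOpen U → RelScottOpen specLE U

/-- A space is *sober* if every irreducible closed set is the closure of a unique point. -/
def SoberSp (Z : Type u) [TopologicalSpace Z] : Prop :=
  ∀ A : Set Z, IsClosed A → IsIrreducible A → ∃! z : Z, A = closure {z}

/-- A closed set `A` is a *Rudin set* if there is a (nonempty) family of nonempty compact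
saturated sets, filtered under reverse inclusion, such that `A` is a minimal closed set
meeting every member of the family. -/
def RudinSet {X : Type u} [TopologicalSpace X] (A : Set X) : Prop :=
  IsClosed A ∧
  ∃ 𝒦 : Set (Set X), 𝒦.Nonempty ∧
    (∀ K ∈ 𝒦, K.Nonempty ∧ IsCompact K ∧ IsSat K) ∧
    (∀ K₁ ∈ 𝒦, ∀ K₂ ∈ 𝒦, ∃ K₃ ∈ 𝒦, K₃ ⊆ K₁ ∧ K₃ ⊆ K₂) ∧
    (∀ K ∈ 𝒦, (A ∩ K).Nonempty) ∧
    (∀ B : Set X, IsClosed B → (∀ K ∈ 𝒦, (B ∩ K).Nonempty) → B ⊆ A → B = A)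

/-- A *Rudin space*: every irreducible closed subset is a Rudin set. -/
def RudinSpace (X : Type u) [TopologicalSpace X] : Prop :=
  ∀ A : Set X, IsClosed A → IsIrreducible A → RudinSet A

/-- A closed set `A` is *well-filtered determined* (WD) if every continuous map into a
well-filtered T₀ space sends it to a set whose closure is a point closure. -/
def WDSet {X : Type u} [TopologicalSpace X] (A : Set X) : Prop :=
  ∀ (Y : Type v) [TopologicalSpace Y] [T0Space Y], WellFiltered Y →
    ∀ f : X → Y, Continuous f → ∃ y : Y, closure (f '' A) = closure {y}

/-- A *well-filtered determined (WD) space*: every irreducible closed subset is WD. -/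
def WDSpace (X : Type u) [TopologicalSpace X] : Prop :=
  ∀ A : Set X, IsClosed A → IsIrreducible A → WDSet.{u, v} A

/-- Property S: for every irreducible closed set `A`, the family `{↑a : a ∈ A}` is an
irreducible subset of the Scott power space `Σ K(X)`, or
`◇A = {K ∈ K(X) : K ∩ A ≠ ∅}` is an irreducible closed subset of `Σ K(X)`. -/
def PropertyS (X : Type u) [TopologicalSpace X] : Prop :=
  ∀ A : Set X, IsClosed A → IsIrreducible A →
    @IsIrreducible (KS X) (scottTop (KS X)) {K : KS X | ∃ a ∈ A, K.1 = satPt a} ∨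
    (@IsClosed (KS X) (scottTop (KS X)) {K : KS X | (K.1 ∩ A).Nonempty} ∧
      @IsIrreducible (KS X) (scottTop (KS X)) {K : KS X | (K.1 ∩ A).Nonempty})

/-- The order of Jia's dcpo on `ℕ × ℕ × (ℕ ∪ {∞})`:
`(i₁,j₁,k₁) ≤ (i₂,j₂,k₂)` iff (`i₁ = i₂`, `j₁ = j₂` and `k₁ ≤ k₂`) or
(`i₂ = i₁ + 1`, `k₁ ≤ j₂` and `k₂ = ∞`). -/
def LJiaLE (a b : ℕ × ℕ × WithTop ℕ) : Prop :=
  (a.1 = b.1 ∧ a.2.1 = b.2.1 ∧ a.2.2 ≤ b.2.2) ∨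
  (b.1 = a.1 + 1 ∧ a.2.2 ≤ (b.2.1 : WithTop ℕ) ∧ b.2.2 = ⊤)

namespace Stmt7Aux

variable {X : Type u} [TopologicalSpace X]

lemma specLE_refl (a : X) : specLE a a := subset_closure rfl

lemma specLE_trans {a b c : X} (h₁ : specLE a b) (h₂ : specLE b c) : specLE a c := by
  have : closure ({b} : Set X) ⊆ closure {c} :=
    closure_minimal (singleton_subset_iff.mpr h₂) isClosed_closure
  exact this h₁

lemma mem_open_of_specLE {U : Set X} (hU : IsOpen U) {a b : X}
    (h : specLE a b) (ha : a ∈ U) : b ∈ U := by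
  obtain ⟨x, hxU, hx⟩ := mem_closure_iff.mp h U hU ha
  rwa [← hx]

lemma mem_sat_iff {A : Set X} {x : X} :
    x ∈ ⋂₀ {U : Set X | IsOpen U ∧ A ⊆ U} ↔ ∃ a ∈ A, specLE a x := by
  constructor
  · intro hx
    by_contra hcon
    push_neg at hcon
    have hAU : A ⊆ (closure ({x} : Set X))ᶜ := fun a ha hmem => hcon a ha hmem
    have hxU : x ∈ (closure ({x} : Set X))ᶜ :=
      hx _ ⟨isClosed_closure.isOpen_compl, hAU⟩
    exact hxU (subset_closure rfl)
  · rintro ⟨a, haA, hax⟩ U ⟨hUo, hAU⟩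
    exact mem_open_of_specLE hUo hax (hAU haA)

lemma isSat_iff {A : Set X} :
    IsSat A ↔ ∀ a ∈ A, ∀ b, specLE a b → b ∈ A := by
  constructor
  · intro h a ha b hab
    rw [h]
    exact mem_sat_iff.mpr ⟨a, ha, hab⟩
  · intro h
    apply subset_antisymm
    · intro x hx U hU
      exact hU.2 hx
    · intro x hx
      obtain ⟨a, haA, hax⟩ := mem_sat_iff.mp hx
      exact h a haA x hax

lemma mem_satPt_iff {a x : X} : x ∈ satPt a ↔ specLE a x := by
  have : satPt a = ⋂₀ {U : Set X | IsOpen U ∧ ({a} : Set X) ⊆ U} := by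
    simp only [satPt, singleton_subset_iff]
  rw [this, mem_sat_iff]
  simp

lemma isCompact_up {S : Set X} (hS : IsCompact S) :
    IsCompact {x : X | ∃ a ∈ S, specLE a x} := by
  apply isCompact_of_finite_subcover
  intro ι U hUo hcov
  have hScov : S ⊆ ⋃ i, U i := fun a ha => hcov ⟨a, ha, specLE_refl a⟩
  obtain ⟨t, ht⟩ := hS.elim_finite_subcover U hUo hScov
  refine ⟨t, ?_⟩
  rintro x ⟨a, haS, hax⟩
  obtain ⟨i, hit, hai⟩ := mem_iUnion₂.mp (ht haS)
  exact mem_iUnion₂.mpr ⟨i, hit, mem_open_of_specLE (hUo i) hax hai⟩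

lemma isSat_up (S : Set X) : IsSat {x : X | ∃ a ∈ S, specLE a x} := by
  rw [isSat_iff]
  rintro a ⟨s, hs, hsa⟩ b hab
  exact ⟨s, hs, specLE_trans hsa hab⟩

lemma ncss_satPt (a : X) : (satPt a).Nonempty ∧ IsCompact (satPt a) ∧ IsSat (satPt a) := by
  have hup : satPt a = {x : X | ∃ s ∈ ({a} : Set X), specLE s x} := by
    ext x; rw [mem_satPt_iff]; simp
  refine ⟨⟨a, mem_satPt_iff.mpr (specLE_refl a)⟩, ?_, ?_⟩
  · rw [hup]; exact isCompact_up isCompact_singleton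
  · rw [hup]; exact isSat_up _

end Stmt7Aux

namespace Stmt7Aux

variable {X : Type u} [TopologicalSpace X]

lemma KS.le_def {K L : KS X} : K ≤ L ↔ L.1 ⊆ K.1 := Iff.rfl

/-- The carriers of a set of elements of `KS X`. -/
def carr (d : Set (KS X)) : Set (Set X) := (fun K : KS X => K.1) '' d

lemma inter_ncss (wf : WellFiltered X) {𝒦 : Set (Set X)} (hne : 𝒦.Nonempty)
    (hm : ∀ K ∈ 𝒦, K.Nonempty ∧ IsCompact K ∧ IsSat K)
    (hfil : ∀ K₁ ∈ 𝒦, ∀ K₂ ∈ 𝒦, ∃ K₃ ∈ 𝒦, K₃ ⊆ K₁ ∧ K₃ ⊆ K₂) :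
    (⋂₀ 𝒦).Nonempty ∧ IsCompact (⋂₀ 𝒦) ∧ IsSat (⋂₀ 𝒦) := by
  refine ⟨?_, ?_, ?_⟩
  · by_contra hcon
    rw [Set.not_nonempty_iff_eq_empty] at hcon
    obtain ⟨K, hK, hKe⟩ := wf 𝒦 hne hm hfil ∅ isOpen_empty (by rw [hcon])
    exact (hm K hK).1.ne_empty (hKe.antisymm (empty_subset _))
  · apply isCompact_of_finite_subcover
    intro ι U hUo hcov
    obtain ⟨K, hK𝒦, hKU⟩ := wf 𝒦 hne hm hfil (⋃ i, U i) (isOpen_iUnion hUo) hcov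
    obtain ⟨t, ht⟩ := (hm K hK𝒦).2.1.elim_finite_subcover U hUo hKU
    exact ⟨t, (sInter_subset_of_mem hK𝒦).trans ht⟩
  · rw [isSat_iff]
    intro a ha b hab K hK
    exact isSat_iff.mp (hm K hK).2.2 a (ha K hK) b hab

lemma isLUB_of_carr {d : Set (KS X)} {q : KS X} (hq : q.1 = ⋂₀ carr d) :
    IsLUB d q := by
  constructor
  · intro K hK
    rw [KS.le_def, hq]
    exact sInter_subset_of_mem ⟨K, hK, rfl⟩
  · intro b hb
    rw [KS.le_def, hq]
    rintro x hx S ⟨K, hK, rfl⟩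
    exact hb hK hx

lemma ncss_inter_carr (wf : WellFiltered X) {d : Set (KS X)} (hd : d.Nonempty)
    (hdir : DirectedOn (· ≤ ·) d) :
    (⋂₀ carr d).Nonempty ∧ IsCompact (⋂₀ carr d) ∧ IsSat (⋂₀ carr d) := by
  apply inter_ncss wf (hd.image _)
  · rintro K ⟨K', _, rfl⟩; exact K'.2
  · rintro K₁ ⟨L₁, hL₁, rfl⟩ K₂ ⟨L₂, hL₂, rfl⟩
    obtain ⟨L₃, hL₃, h₁, h₂⟩ := hdir L₁ hL₁ L₂ hL₂
    exact ⟨L₃.1, ⟨L₃, hL₃, rfl⟩, h₁, h₂⟩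

lemma carr_of_isLUB (wf : WellFiltered X) {d : Set (KS X)} (hd : d.Nonempty)
    (hdir : DirectedOn (· ≤ ·) d) {a : KS X} (ha : IsLUB d a) :
    a.1 = ⋂₀ carr d := by
  have hq := ncss_inter_carr wf hd hdir
  have : a = (⟨⋂₀ carr d, hq⟩ : KS X) := ha.unique (isLUB_of_carr rfl)
  rw [this]

lemma scottOpen_box (wf : WellFiltered X) {U : Set X} (hU : IsOpen U) :
    ScottOpen {K : KS X | K.1 ⊆ U} := by
  constructor
  · intro K L hKL hK
    exact (KS.le_def.mp hKL).trans hK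
  · intro d hd hdir a ha haU
    have hcar := carr_of_isLUB wf hd hdir ha
    have hsub : ⋂₀ carr d ⊆ U := by rw [← hcar]; exact haU
    obtain ⟨S, hS, hSU⟩ := wf (carr d) (hd.image _)
      (by rintro K ⟨K', _, rfl⟩; exact K'.2)
      (by rintro K₁ ⟨L₁, hL₁, rfl⟩ K₂ ⟨L₂, hL₂, rfl⟩
          obtain ⟨L₃, hL₃, h₁, h₂⟩ := hdir L₁ hL₁ L₂ hL₂
          exact ⟨L₃.1, ⟨L₃, hL₃, rfl⟩, h₁, h₂⟩) U hU hsub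
    obtain ⟨K, hKd, rfl⟩ := hS
    exact ⟨K, hKd, hSU⟩

lemma scottOpen_of_uv (wf : WellFiltered X) {𝒰 : Set (KS X)}
    (h : @IsOpen (KS X) (upperVietoris X) 𝒰) : ScottOpen 𝒰 := by
  induction h with
  | basic s hs => obtain ⟨U, hU, rfl⟩ := hs; exact scottOpen_box wf hU
  | univ => exact (scottTop (KS X)).isOpen_univ
  | inter s t _ _ ihs iht => exact (scottTop (KS X)).isOpen_inter s t ihs iht
  | sUnion S _ ih => exact (scottTop (KS X)).isOpen_sUnion S ih

end Stmt7Aux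

namespace Stmt7Aux

lemma dSpace_of_wf {Y : Type u} [TopologicalSpace Y] (wf : WellFiltered Y) : DSpace Y := by
  constructor
  · -- directed completeness
    intro D hDne hDdir
    set A := closure D with hA
    set F : Set (Set Y) := {S | ∃ x ∈ D, S = {y : Y | ∃ a ∈ A ∩ satPt x, specLE a y}} with hF
    have hmem : ∀ x ∈ D, {y : Y | ∃ a ∈ A ∩ satPt x, specLE a y} ∈ F :=
      fun x hx => ⟨x, hx, rfl⟩
    have hself : ∀ x ∈ D, x ∈ A ∩ satPt x := fun x hx =>
      ⟨subset_closure hx, mem_satPt_iff.mpr (specLE_refl x)⟩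
    have hFne : F.Nonempty := by
      obtain ⟨x, hx⟩ := hDne; exact ⟨_, hmem x hx⟩
    have hFm : ∀ S ∈ F, S.Nonempty ∧ IsCompact S ∧ IsSat S := by
      rintro S ⟨x, hxD, rfl⟩
      refine ⟨⟨x, x, hself x hxD, specLE_refl x⟩, ?_, isSat_up _⟩
      have hc : IsCompact (A ∩ satPt x) :=
        ((ncss_satPt x).2.1.inter_left isClosed_closure)
      exact isCompact_up hc
    have hmono : ∀ x₁ x₂ : Y, specLE x₁ x₂ →
        {y : Y | ∃ a ∈ A ∩ satPt x₂, specLE a y} ⊆ {y : Y | ∃ a ∈ A ∩ satPt x₁, specLE a y} := by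
      rintro x₁ x₂ h12 y ⟨a, ⟨haA, hax⟩, hay⟩
      exact ⟨a, ⟨haA, mem_satPt_iff.mpr (specLE_trans h12 (mem_satPt_iff.mp hax))⟩, hay⟩
    have hFfil : ∀ S₁ ∈ F, ∀ S₂ ∈ F, ∃ S₃ ∈ F, S₃ ⊆ S₁ ∧ S₃ ⊆ S₂ := by
      rintro S₁ ⟨x₁, hx₁, rfl⟩ S₂ ⟨x₂, hx₂, rfl⟩
      obtain ⟨x₃, hx₃, h₁, h₂⟩ := hDdir x₁ hx₁ x₂ hx₂
      exact ⟨_, hmem x₃ hx₃, hmono _ _ h₁, hmono _ _ h₂⟩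
    -- the intersection meets A
    have hmeet : (⋂₀ F ∩ A).Nonempty := by
      by_contra hcon
      rw [Set.not_nonempty_iff_eq_empty] at hcon
      have hsub : ⋂₀ F ⊆ Aᶜ := by
        intro y hy
        intro hyA
        exact absurd (Set.eq_empty_iff_forall_notMem.mp hcon y ⟨hy, hyA⟩) (fun h => h)
      obtain ⟨S, hSF, hSA⟩ := wf F hFne hFm hFfil Aᶜ isClosed_closure.isOpen_compl hsub
      obtain ⟨x, hxD, rfl⟩ := hSF
      exact hSA ⟨x, hself x hxD, specLE_refl x⟩ (subset_closure hxD)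
    obtain ⟨a, haF, haA⟩ := hmeet
    refine ⟨a, ?_, ?_⟩
    · intro x hxD
      obtain ⟨s, ⟨hsA, hsx⟩, hsa⟩ := haF _ (hmem x hxD)
      exact specLE_trans (mem_satPt_iff.mp hsx) hsa
    · intro b hb
      have hDb : D ⊆ closure {b} := fun x hx => hb x hx
      have : A ⊆ closure {b} := closure_minimal hDb isClosed_closure
      exact this haA
  · -- open sets are Scott open
    intro U hU
    constructor
    · intro x y hxU hxy
      exact mem_open_of_specLE hU hxy hxU
    · intro D hDne hDdir a ha haU
      set F : Set (Set Y) := {S | ∃ x ∈ D, S = satPt x} with hF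
      have hFne : F.Nonempty := by obtain ⟨x, hx⟩ := hDne; exact ⟨_, x, hx, rfl⟩
      have hFm : ∀ S ∈ F, S.Nonempty ∧ IsCompact S ∧ IsSat S := by
        rintro S ⟨x, _, rfl⟩; exact ncss_satPt x
      have hFfil : ∀ S₁ ∈ F, ∀ S₂ ∈ F, ∃ S₃ ∈ F, S₃ ⊆ S₁ ∧ S₃ ⊆ S₂ := by
        rintro S₁ ⟨x₁, hx₁, rfl⟩ S₂ ⟨x₂, hx₂, rfl⟩
        obtain ⟨x₃, hx₃, h₁, h₂⟩ := hDdir x₁ hx₁ x₂ hx₂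
        refine ⟨satPt x₃, ⟨x₃, hx₃, rfl⟩, ?_, ?_⟩ <;>
          · intro y hy
            rw [mem_satPt_iff] at *
            first
              | exact specLE_trans h₁ hy
              | exact specLE_trans h₂ hy
      have hsub : ⋂₀ F ⊆ U := by
        intro y hy
        have hub : ∀ x ∈ D, specLE x y := fun x hx =>
          mem_satPt_iff.mp (hy _ ⟨x, hx, rfl⟩)
        exact mem_open_of_specLE hU (ha.2 y hub) haU
      obtain ⟨S, hSF, hSU⟩ := wf F hFne hFm hFfil U hU hsub
      obtain ⟨x, hxD, rfl⟩ := hSF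
      exact ⟨x, hxD, hSU (mem_satPt_iff.mpr (specLE_refl x))⟩

lemma specLE_scott {P : Type u} [Preorder P] {x y : P} :
    @specLE P (scottTop P) x y ↔ x ≤ y := by
  letI : TopologicalSpace P := scottTop P
  constructor
  · intro h
    by_contra hxy
    have hopen : @IsOpen P (scottTop P) {z : P | ¬ z ≤ y} := by
      show ScottOpen _
      constructor
      · intro z w hzw hz hwy
        exact hz (hzw.trans hwy)
      · intro d hd hdir a ha hay
        by_contra hcon
        rw [Set.not_nonempty_iff_eq_empty] at hcon
        have : ∀ z ∈ d, z ≤ y := by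
          intro z hz
          by_contra hzy
          exact absurd (Set.eq_empty_iff_forall_notMem.mp hcon z ⟨hz, hzy⟩) (fun h => h)
        exact hay (ha.2 this)
      
    have h' : x ∈ closure {y} := h
    obtain ⟨w, hwm, hw⟩ := mem_closure_iff.mp h' _ hopen hxy
    rw [hw] at hwm
    exact hwm le_rfl
  · intro h
    show x ∈ closure {y}
    rw [mem_closure_iff]
    intro o ho hxo
    exact ⟨y, ho.1 h hxo, rfl⟩

end Stmt7Aux

namespace Stmt7Aux

lemma chain_min {α : Type u} {c : Set (Set α)} (hc : IsChain (· ⊆ ·) c) :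

    ∀ t : Finset ↥c, t.Nonempty → ∃ b₀ ∈ t, ∀ b ∈ t, (b₀ : Set α) ⊆ (b : Set α) := by
  classical
  intro t
  induction t using Finset.induction_on with
  | empty => intro h; simp at h
  | @insert a s ha ih =>
    intro _
    rcases s.eq_empty_or_nonempty with rfl | hs
    · refine ⟨a, Finset.mem_insert_self a _, ?_⟩
      intro b hb
      rcases Finset.mem_insert.mp hb with rfl | hb
      · exact subset_rfl
      · simp at hb
    · obtain ⟨b₀, hb₀s, hb₀min⟩ := ih hs
      rcases eq_or_ne (a : Set α) (b₀ : Set α) with heq | hne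
      · refine ⟨b₀, Finset.mem_insert_of_mem hb₀s, ?_⟩
        intro b hb
        rcases Finset.mem_insert.mp hb with rfl | hb
        · rw [heq]
        · exact hb₀min b hb
      · rcases hc a.2 b₀.2 hne with hab | hba
        · refine ⟨a, Finset.mem_insert_self a _, ?_⟩
          intro b hb
          rcases Finset.mem_insert.mp hb with rfl | hb
          · exact subset_rfl
          · exact hab.trans (hb₀min b hb)
        · refine ⟨b₀, Finset.mem_insert_of_mem hb₀s, ?_⟩
          intro b hb
          rcases Finset.mem_insert.mp hb with rfl | hb
          · exact hba
          · exact hb₀min b hb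

end Stmt7Aux

namespace Stmt7Aux

lemma wf_sigma {X : Type u} [TopologicalSpace X] (wf : WellFiltered X) :
    @WellFiltered (KS X) (scottTop (KS X)) := by
  letI tS : TopologicalSpace (KS X) := scottTop (KS X)
  intro 𝔎 h𝔎ne hm hfil 𝒰 h𝒰 hsub
  by_contra hcon
  push_neg at hcon
  -- the family of closed sets contained in 𝒰ᶜ meeting every member of 𝔎
  set S : Set (Set (KS X)) :=
    {B | IsClosed B ∧ B ⊆ 𝒰ᶜ ∧ ∀ Kb ∈ 𝔎, (B ∩ Kb).Nonempty} with hS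
  have hUcS : 𝒰ᶜ ∈ S := by
    refine ⟨h𝒰.isClosed_compl, subset_rfl, ?_⟩
    intro Kb hKb
    obtain ⟨K, hKKb, hKU⟩ := Set.not_subset.mp (hcon Kb hKb)
    exact ⟨K, hKU, hKKb⟩
  -- Zorn's lemma gives a minimal such closed set
  have hzorn : ∃ m, m ⊆ 𝒰ᶜ ∧ Minimal (· ∈ S) m := by
    apply zorn_superset_nonempty S ?_ _ hUcS
    intro c hcS hchain hcne
    refine ⟨⋂₀ c, ⟨?_, ?_, ?_⟩, fun s hs => sInter_subset_of_mem hs⟩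
    · exact isClosed_sInter fun B hB => (hcS hB).1
    · obtain ⟨b, hb⟩ := hcne
      exact (sInter_subset_of_mem hb).trans (hcS hb).2.1
    · intro Kb hKb
      by_contra hemp
      rw [Set.not_nonempty_iff_eq_empty] at hemp
      have hKcov : Kb ⊆ ⋃ b : ↥c, (↑b : Set (KS X))ᶜ := by
        intro K hK
        by_contra hKn
        simp only [mem_iUnion, mem_compl_iff, not_exists, not_not] at hKn
        have hKint : K ∈ ⋂₀ c := fun b hb => hKn ⟨b, hb⟩
        exact absurd hemp (Set.nonempty_iff_ne_empty.mp ⟨K, hKint, hK⟩)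
      obtain ⟨t, ht⟩ := (hm Kb hKb).2.1.elim_finite_subcover _
        (fun b : ↥c => (hcS b.2).1.isOpen_compl) hKcov
      have htne : t.Nonempty := by
        rcases t.eq_empty_or_nonempty with rfl | h
        · obtain ⟨K, hK⟩ := (hm Kb hKb).1
          have := ht hK
          simp at this
        · exact h
      obtain ⟨b₀, hb₀t, hb₀min⟩ := chain_min hchain t htne
      obtain ⟨K, hKb₀, hKKb⟩ := (hcS b₀.2).2.2 Kb hKb
      obtain ⟨b, hbt, hKb⟩ := mem_iUnion₂.mp (ht hKKb)
      exact hKb (hb₀min b hbt hKb₀)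
  obtain ⟨Ab, hAbU, hAbmin⟩ := hzorn
  have hAbS : Ab ∈ S := hAbmin.prop
  obtain ⟨hAbc, hAb𝒞, hAbmeets⟩ := hAbS
  -- Ab is a lower set
  have hAbcopen : ScottOpen Abᶜ := hAbc.isOpen_compl
  have hlow : ∀ K L : KS X, K ∈ Ab → L ≤ K → L ∈ Ab := by
    intro K L hK hLK
    by_contra hL
    exact (hAbcopen.1 hLK hL) hK
  -- Ab is closed under suprema of directed subsets
  have hlubc : ∀ dd : Set (KS X), dd ⊆ Ab → dd.Nonempty → DirectedOn (· ≤ ·) dd →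
      ∀ a : KS X, IsLUB dd a → a ∈ Ab := by
    intro dd hddAb hddne hdddir a ha
    by_contra haA
    obtain ⟨K, hKdd, hK⟩ := hAbcopen.2 dd hddne hdddir a ha haA
    exact hK (hddAb hKdd)
  -- the family of unions over Ab ∩ Kb
  set ℱ : Set (Set X) := {T | ∃ Kb ∈ 𝔎, T = ⋃₀ carr (Ab ∩ Kb)} with hℱ
  have hGncss : ∀ Kb ∈ 𝔎, (⋃₀ carr (Ab ∩ Kb)).Nonempty ∧
      IsCompact (⋃₀ carr (Ab ∩ Kb)) ∧ IsSat (⋃₀ carr (Ab ∩ Kb)) := by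
    intro Kb hKb
    refine ⟨?_, ?_, ?_⟩
    · obtain ⟨K, hK⟩ := hAbmeets Kb hKb
      obtain ⟨x, hx⟩ := K.2.1
      exact ⟨x, K.1, ⟨K, hK, rfl⟩, hx⟩
    · apply isCompact_of_finite_subcover
      intro ι U hUo hcov
      classical
      have hAKcpt : IsCompact (Ab ∩ Kb) := (hm Kb hKb).2.1.inter_left hAbc
      set V : Finset ι → Set (KS X) := fun t => {K : KS X | K.1 ⊆ ⋃ i ∈ t, U i} with hV
      have hVo : ∀ t, IsOpen (V t) := by
        intro t
        exact (scottOpen_box wf (isOpen_biUnion fun i _ => hUo i) :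
          ScottOpen {K : KS X | K.1 ⊆ ⋃ i ∈ t, U i})
      have hcov2 : Ab ∩ Kb ⊆ ⋃ t, V t := by
        intro K hK
        have hKU : K.1 ⊆ ⋃ i, U i := fun x hx => hcov ⟨K.1, ⟨K, hK, rfl⟩, hx⟩
        obtain ⟨t, ht⟩ := K.2.2.1.elim_finite_subcover U hUo hKU
        exact mem_iUnion.mpr ⟨t, ht⟩
      obtain ⟨T, hT⟩ := hAKcpt.elim_finite_subcover V hVo hcov2
      refine ⟨T.biUnion id, ?_⟩
      rintro x ⟨T', ⟨K, hK, rfl⟩, hx⟩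
      obtain ⟨t, htT, hKt⟩ := mem_iUnion₂.mp (hT hK)
      obtain ⟨i, hit, hxi⟩ := mem_iUnion₂.mp (hKt hx)
      exact mem_iUnion₂.mpr ⟨i, Finset.mem_biUnion.mpr ⟨t, htT, hit⟩, hxi⟩
    · rw [isSat_iff]
      rintro a ⟨T', ⟨K, hK, rfl⟩, ha⟩ b hab
      exact ⟨K.1, ⟨K, hK, rfl⟩, isSat_iff.mp K.2.2.2 a ha b hab⟩
  have hℱne : ℱ.Nonempty := by
    obtain ⟨Kb, hKb⟩ := h𝔎ne
    exact ⟨_, Kb, hKb, rfl⟩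
  have hℱm : ∀ T ∈ ℱ, T.Nonempty ∧ IsCompact T ∧ IsSat T := by
    rintro T ⟨Kb, hKb, rfl⟩
    exact hGncss Kb hKb
  have hGmono : ∀ Kb₁ Kb₂ : Set (KS X), Kb₁ ⊆ Kb₂ →
      ⋃₀ carr (Ab ∩ Kb₁) ⊆ ⋃₀ carr (Ab ∩ Kb₂) := by
    rintro Kb₁ Kb₂ h x ⟨T', ⟨K, hK, rfl⟩, hx⟩
    exact ⟨K.1, ⟨K, ⟨hK.1, h hK.2⟩, rfl⟩, hx⟩
  have hℱfil : ∀ T₁ ∈ ℱ, ∀ T₂ ∈ ℱ, ∃ T₃ ∈ ℱ, T₃ ⊆ T₁ ∧ T₃ ⊆ T₂ := by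
    rintro T₁ ⟨Kb₁, hKb₁, rfl⟩ T₂ ⟨Kb₂, hKb₂, rfl⟩
    obtain ⟨Kb₃, hKb₃, h₁, h₂⟩ := hfil Kb₁ hKb₁ Kb₂ hKb₂
    exact ⟨_, ⟨Kb₃, hKb₃, rfl⟩, hGmono _ _ h₁, hGmono _ _ h₂⟩
  have hQ := inter_ncss wf hℱne hℱm hℱfil
  set qQ : KS X := ⟨⋂₀ ℱ, hQ⟩ with hqQ
  -- every element of ⋂₀ ℱ belongs to every member of Ab
  have claim1 : ∀ q ∈ ⋂₀ ℱ, ∀ K ∈ Ab, q ∈ K.1 := by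
    intro q hq
    have hop : ScottOpen {K : KS X | q ∉ K.1} := by
      constructor
      · intro K L hKL hK hL
        exact hK (hKL hL)
      · intro d hd hdir a ha haq
        by_contra hemp
        rw [Set.not_nonempty_iff_eq_empty] at hemp
        have hall : ∀ K ∈ d, q ∈ K.1 := by
          intro K hK
          by_contra hqK
          exact absurd (Set.eq_empty_iff_forall_notMem.mp hemp K ⟨hK, hqK⟩) (fun h => h)
        have hcar := carr_of_isLUB wf hd hdir ha
        refine haq ?_
        rw [hcar]
        rintro T ⟨K, hK, rfl⟩
        exact hall K hK
    have hclosed : IsClosed {K : KS X | q ∈ K.1} := by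
      have : {K : KS X | q ∈ K.1} = {K : KS X | q ∉ K.1}ᶜ := by
        ext K; simp
      rw [this]
      exact isClosed_compl_iff.mpr hop
    have hCS : Ab ∩ {K : KS X | q ∈ K.1} ∈ S := by
      refine ⟨hAbc.inter hclosed, inter_subset_left.trans hAb𝒞, ?_⟩
      intro Kb hKb
      obtain ⟨T', ⟨K, hK, rfl⟩, hqK⟩ := hq _ ⟨Kb, hKb, rfl⟩
      exact ⟨K, ⟨hK.1, hqK⟩, hK.2⟩
    have := hAbmin.2 hCS inter_subset_left
    intro K hK
    exact (this hK).2
  -- qQ belongs to Ab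
  have claim2 : qQ ∈ Ab := by
    set dG : Set (KS X) := {L | ∃ Kb ∈ 𝔎, L.1 = ⋃₀ carr (Ab ∩ Kb)} with hdG
    have hdGAb : dG ⊆ Ab := by
      rintro L ⟨Kb, hKb, hL⟩
      obtain ⟨K, hK⟩ := hAbmeets Kb hKb
      refine hlow K L hK.1 ?_
      rw [KS.le_def, hL]
      exact fun x hx => ⟨K.1, ⟨K, hK, rfl⟩, hx⟩
    have hdGne : dG.Nonempty := by
      obtain ⟨Kb, hKb⟩ := h𝔎ne
      exact ⟨⟨_, hGncss Kb hKb⟩, Kb, hKb, rfl⟩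
    have hdGdir : DirectedOn (· ≤ ·) dG := by
      rintro L₁ ⟨Kb₁, hKb₁, hL₁⟩ L₂ ⟨Kb₂, hKb₂, hL₂⟩
      obtain ⟨Kb₃, hKb₃, h₁, h₂⟩ := hfil Kb₁ hKb₁ Kb₂ hKb₂
      refine ⟨⟨_, hGncss Kb₃ hKb₃⟩, ⟨Kb₃, hKb₃, rfl⟩, ?_, ?_⟩
      · show L₁ ≤ _
        show ⋃₀ carr (Ab ∩ Kb₃) ⊆ (L₁.1 : Set X); rw [hL₁]; exact hGmono _ _ h₁
      · show L₂ ≤ _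
        show ⋃₀ carr (Ab ∩ Kb₃) ⊆ (L₂.1 : Set X); rw [hL₂]; exact hGmono _ _ h₂
    have hcarr : carr dG = ℱ := by
      apply subset_antisymm
      · rintro T ⟨L, ⟨Kb, hKb, hL⟩, rfl⟩
        exact ⟨Kb, hKb, hL⟩
      · rintro T ⟨Kb, hKb, rfl⟩
        exact ⟨⟨_, hGncss Kb hKb⟩, ⟨Kb, hKb, rfl⟩, rfl⟩
    have hlub : IsLUB dG qQ := isLUB_of_carr (by rw [hcarr])
    exact hlubc dG hdGAb hdGne hdGdir qQ hlub
  -- qQ belongs to every Kb ∈ 𝔎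
  have claim3 : qQ ∈ ⋂₀ 𝔎 := by
    intro Kb hKb
    obtain ⟨K, hK⟩ := hAbmeets Kb hKb
    have hKQ : K ≤ qQ := by
      rw [KS.le_def]
      intro q hq
      exact claim1 q hq K hK.1
    have hspec : @specLE (KS X) tS K qQ := specLE_scott.mpr hKQ
    exact isSat_iff.mp (hm Kb hKb).2.2 K hK.2 qQ hspec
  exact (hAb𝒞 claim2) (hsub claim3)

end Stmt7Aux

open Stmt7Aux in
/-- For a `T₀` space `X`, the following are equivalent:
(1) `X` is well-filtered;
(2) every upper-Vietoris-open subset of `K(X)` is Scott open and `Σ K(X)` is well-filtered;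
(3) every upper-Vietoris-open subset of `K(X)` is Scott open and `Σ K(X)` is a d-space;
(4) `K(X)` with the Smyth order is a dcpo and every upper-Vietoris-open subset of `K(X)` is
Scott open. -/
theorem stmt7 {X : Type u} [TopologicalSpace X] [T0Space X] :
    List.TFAE [
      WellFiltered X,
      (∀ U : Set (KS X), @IsOpen (KS X) (upperVietoris X) U → ScottOpen U) ∧
        @WellFiltered (KS X) (scottTop (KS X)),
      (∀ U : Set (KS X), @IsOpen (KS X) (upperVietoris X) U → ScottOpen U) ∧
        @DSpace (KS X) (scottTop (KS X)),
      (∀ d : Set (KS X), d.Nonempty → DirectedOn (· ≤ ·) d → ∃ a : KS X, IsLUB d a) ∧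
        (∀ U : Set (KS X), @IsOpen (KS X) (upperVietoris X) U → ScottOpen U)] := by
  tfae_have 1 → 2 := by
    intro wf
    exact ⟨fun U hU => scottOpen_of_uv wf hU, wf_sigma wf⟩
  tfae_have 2 → 3 := by
    rintro ⟨hbox, hwf⟩
    exact ⟨hbox, @dSpace_of_wf (KS X) (scottTop (KS X)) hwf⟩
  tfae_have 3 → 4 := by
    rintro ⟨hbox, hdc, -⟩
    refine ⟨?_, hbox⟩
    intro d hne hdir
    letI tS : TopologicalSpace (KS X) := scottTop (KS X)
    have hdir' : DirectedOn specLE d := by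
      intro x hx y hy
      obtain ⟨z, hz, h1, h2⟩ := hdir x hx y hy
      exact ⟨z, hz, specLE_scott.mpr h1, specLE_scott.mpr h2⟩
    obtain ⟨a, ha1, ha2⟩ := hdc d hne hdir'
    refine ⟨a, fun x hx => specLE_scott.mp (ha1 x hx), ?_⟩
    intro b hb
    exact specLE_scott.mp (ha2 b fun x hx => specLE_scott.mpr (hb hx))
  tfae_have 4 → 1 := by
    rintro ⟨hdc, hbox⟩
    intro 𝒦 hne hm hfil U hU hsub
    set d : Set (KS X) := {K : KS X | K.1 ∈ 𝒦} with hd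
    have hdne : d.Nonempty := by
      obtain ⟨K₀, h⟩ := hne
      exact ⟨⟨K₀, hm K₀ h⟩, h⟩
    have hddir : DirectedOn (· ≤ ·) d := by
      intro K₁ h₁ K₂ h₂
      obtain ⟨K₃, h₃, s1, s2⟩ := hfil K₁.1 h₁ K₂.1 h₂
      exact ⟨⟨K₃, hm K₃ h₃⟩, h₃, s1, s2⟩
    obtain ⟨a, ha⟩ := hdc d hdne hddir
    have hUVopen : @IsOpen (KS X) (upperVietoris X) {K : KS X | K.1 ⊆ U} :=
      TopologicalSpace.GenerateOpen.basic _ ⟨U, hU, rfl⟩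
    have hscott := hbox _ hUVopen
    have haU : a ∈ {K : KS X | K.1 ⊆ U} := by
      intro x hx
      apply hsub
      intro K hK
      exact ha.1 (show (⟨K, hm K hK⟩ : KS X) ∈ d from hK) hx
    obtain ⟨K, hKd, hKU⟩ := hscott.2 d hdne hddir a ha haU
    exact ⟨K.1, hKd, hKU⟩
  tfae_finish
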